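/- Let d ≥ 1 be an integer and define v_d(r) = ϱ({y ∈ [−1,1]^d : ∏_{k=1}^d (1−y_k²) ≤ r}), where ϱ is the uniform probability measure on [−1,1]^d. Then for every 0 < r ≤ 1, (r/(2(d−1)!))·(log(1/√r))^{d−1} < v_d(r) ≤ (r/(d−1)!)·(log(2^d e/√r))^{d−1}. -/

import Mathlib

open MeasureTheory Real

noncomputable section

/-- The uniform probability measure on `[-1,1]`. -/
def unif : Measure ℝ := (2 : ENNReal)⁻¹ • volume.restrict (Set.Icc (-1 : ℝ) 1)

instance : IsProbabilityMeasure unif := by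
  constructor
  simp only [unif, Measure.smul_apply, Measure.restrict_apply MeasurableSet.univ,
    Set.univ_inter, Real.volume_Icc, smul_eq_mul]
  rw [show (1 : ℝ) - (-1) = 2 by norm_num]
  rw [ENNReal.ofReal_ofNat]
  exact ENNReal.inv_mul_cancel (by norm_num) (by norm_num)

/-- The uniform probability measure on `[-1,1]^d`. -/
def unifd (d : ℕ) : Measure (Fin d → ℝ) := Measure.pi fun _ => unif

/-- The multivariate envelope bound `Ω(y) = 2^d / (π^{d/2} ∏_k (1-y_k²)^{1/4})`. -/
def envM (d : ℕ) (y : Fin d → ℝ) : ℝ :=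
  2 ^ d / (π ^ ((d : ℝ) / 2) * ∏ k, (1 - y k ^ 2) ^ ((1 : ℝ) / 4))

/-- `H_d(β) = β (log(1/β))^{d-1}`. -/
def Hd (d : ℕ) (β : ℝ) : ℝ := β * Real.log (1 / β) ^ (d - 1)

namespace S15

/-- artanh -/
def ath (x : ℝ) : ℝ := (Real.log (1+x) - Real.log (1-x))/2

lemma ath_zero : ath 0 = 0 := by simp [ath]

lemma hasDerivAt_ath {x : ℝ} (h1 : -1 < x) (h2 : x < 1) :
    HasDerivAt ath (1/(1-x^2)) x := by
  have ha : (1:ℝ) + x ≠ 0 := by linarith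
  have hb : (1:ℝ) - x ≠ 0 := by linarith
  have d1 : HasDerivAt (fun x : ℝ => Real.log (1+x)) (1/(1+x)) x := by
    simpa using (((hasDerivAt_id x).const_add 1).log ha)
  have d2 : HasDerivAt (fun x : ℝ => Real.log (1-x)) (-1/(1-x)) x := by
    simpa using (((hasDerivAt_id x).const_sub 1).log hb)
  have hc : (1:ℝ) - x^2 ≠ 0 := by nlinarith
  have := (d1.sub d2).div_const 2
  refine this.congr_deriv ?_
  field_simp
  ring

lemma ath_eq {x : ℝ} (h1 : -1 < x) (h2 : x < 1) :
    ath x = Real.log (1+x) - Real.log (1-x^2) / 2 := by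
  have ha : (0:ℝ) < 1 + x := by linarith
  have hb : (0:ℝ) < 1 - x := by linarith
  have : (1:ℝ) - x^2 = (1+x)*(1-x) := by ring
  rw [ath, this, Real.log_mul ha.ne' hb.ne']
  ring

lemma ath_mono {x y : ℝ} (h0 : 0 ≤ x) (hxy : x ≤ y) (h1 : y < 1) :
    ath x ≤ ath y := by
  have : Real.log (1+x) ≤ Real.log (1+y) := Real.log_le_log (by linarith) (by linarith)
  have h2 : Real.log (1-y) ≤ Real.log (1-x) := Real.log_le_log (by linarith) (by linarith)
  unfold ath; linarith

lemma ath_nonneg {x : ℝ} (h0 : 0 ≤ x) (h1 : x < 1) : 0 ≤ ath x := by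
  have := ath_mono (le_refl 0) h0 h1
  rwa [ath_zero] at this


def el (s : ℝ) : ℝ := Real.log (1 / Real.sqrt s)

lemma el_eq {s : ℝ} (h : 0 ≤ s) : el s = -Real.log s / 2 := by
  rw [el, one_div, Real.log_inv, Real.log_sqrt h]
  ring

lemma el_nonneg {s : ℝ} (h0 : 0 < s) (h1 : s ≤ 1) : 0 ≤ el s := by
  rw [el_eq h0.le]
  have := Real.log_nonpos h0.le h1
  linarith

lemma el_div {s u : ℝ} (hs : 0 < s) (hu : 0 < u) :
    el (s/u) = el s + Real.log u / 2 := by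
  rw [el_eq (by positivity), el_eq hs.le, Real.log_div hs.ne' hu.ne']
  ring

lemma bernoulli_pow (a b : ℝ) (ha : 0 ≤ a) (hb : 0 ≤ b) :
    ∀ n : ℕ, a^(n+1) + (n+1)*b*a^n ≤ (a+b)^(n+1) := by
  intro n
  induction n with
  | zero => norm_num
  | succ n ih =>
    have h1 : (a+b)^(n+1+1) = (a+b)*(a+b)^(n+1) := by ring
    have h2 : (a+b)*(a^(n+1) + (n+1)*b*a^n) ≤ (a+b)*(a+b)^(n+1) := by
      apply mul_le_mul_of_nonneg_left ih (by linarith)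
    have h3 : a^(n+1+1) + ((n:ℝ)+1+1)*b*a^(n+1) ≤ (a+b)*(a^(n+1) + ((n:ℝ)+1)*b*a^n) := by
      have hA : (0:ℝ) ≤ a^n := pow_nonneg ha n
      have e2 : a^(n+1) = a^n * a := pow_succ a n
      have e3 : a^(n+1+1) = a^n * a * a := by rw [pow_succ, e2]
      rw [e2, e3]
      nlinarith [mul_nonneg (mul_nonneg (Nat.cast_nonneg (α := ℝ) n) (mul_nonneg hb hb)) hA,
        mul_nonneg (mul_nonneg hb hb) hA]
    push_cast
    push_cast at h2 ih
    calc a^(n+1+1) + ((n:ℝ)+1+1)*b*a^(n+1) ≤ (a+b)*(a^(n+1) + ((n:ℝ)+1)*b*a^n) := h3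
      _ ≤ (a+b)^(n+1+1) := by rw [h1]; exact h2
  
lemma log2_half : (1:ℝ)/2 < Real.log 2 := by
  have := Real.log_two_gt_d9
  linarith

lemma fact_le (d : ℕ) : (d.factorial : ℝ) ≤ (d * Real.log 2 + 1)^d := by
  induction d with
  | zero => simp
  | succ n ih =>
    have l2 := log2_half
    have hc : (1:ℝ) ≤ n * Real.log 2 + 1 := by
      have : (0:ℝ) ≤ n * Real.log 2 := by positivity
      linarith
    set c : ℝ := n * Real.log 2 + 1 with hcdef
    have key : ((n:ℝ)+1) * Real.log 2 + 1 = c + Real.log 2 := by push_cast; ring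
    have h1 : c^(n+1) + (n+1)*Real.log 2*c^n ≤ (c + Real.log 2)^(n+1) :=
      bernoulli_pow c (Real.log 2) (by linarith) (by linarith) n
    have h2 : ((n+1).factorial : ℝ) = (n+1) * n.factorial := by
      rw [Nat.factorial_succ]; push_cast; ring
    have h3 : ((n+1:ℝ)) * (n.factorial:ℝ) ≤ (n+1) * c^n := by
      apply mul_le_mul_of_nonneg_left ih (by positivity)
    have h4 : ((n+1):ℝ) * c^n ≤ c^(n+1) + (n+1)*Real.log 2*c^n := by
      have hcn : (0:ℝ) ≤ c^n := by positivity
      have h5 : ((n+1):ℝ) ≤ c + (n+1)*Real.log 2 := by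
        have : ((n:ℝ)) ≤ (2*n+1) * Real.log 2 := by nlinarith [Nat.cast_nonneg (α := ℝ) n]
        simp only [hcdef]
        linarith
      calc ((n+1):ℝ) * c^n ≤ (c + (n+1)*Real.log 2) * c^n :=
            mul_le_mul_of_nonneg_right h5 hcn
        _ = c^(n+1) + (n+1)*Real.log 2*c^n := by ring
    push_cast
    rw [key]
    calc ((n+1).factorial : ℝ) = (n+1) * n.factorial := h2
      _ ≤ (n+1) * c^n := h3
      _ ≤ c^(n+1) + (n+1)*Real.log 2*c^n := h4
      _ ≤ (c + Real.log 2)^(n+1) := h1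

lemma one_le_fact (m : ℕ) : (1:ℝ) ≤ m.factorial := by
  exact_mod_cast Nat.one_le_iff_ne_zero.2 m.factorial_ne_zero

lemma sqrt_lb {s : ℝ} (h0 : 0 < s) (h1 : s ≤ 1) :
    Real.sqrt (1-s) ≤ 1 - s/2 - s^2/8 := by
  have ht := Real.sqrt_nonneg (1-s)
  have hts : Real.sqrt (1-s) ^ 2 = 1 - s := Real.sq_sqrt (by linarith)
  have hB : (3:ℝ)/8 ≤ 1 - s/2 - s^2/8 := by nlinarith
  nlinarith [sq_nonneg (Real.sqrt (1-s) - (1 - s/2 - s^2/8)), sq_nonneg s]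

lemma sqrt_ub {s : ℝ} (h0 : 0 < s) (h1 : s ≤ 1) :
    1 - s ≤ Real.sqrt (1-s) := by
  have ht := Real.sqrt_nonneg (1-s)
  have hts : Real.sqrt (1-s) ^ 2 = 1 - s := Real.sq_sqrt (by linarith)
  nlinarith

-- identity: ath x + log(1-x²)/2 = log (1+x), for 0 ≤ x < 1
lemma ath_log {x : ℝ} (h0 : -1 < x) (h1 : x < 1) :
    ath x + Real.log (1-x^2)/2 = Real.log (1+x) := by
  rw [ath_eq h0 h1]; ring


lemma contOn (m : ℕ) (C K x0 : ℝ) (hx0 : 0 ≤ x0) (hx1 : x0 < 1) :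
    ContinuousOn (fun x => C * (K - ath x)^m / (1 - x^2)) (Set.uIcc (0:ℝ) x0) := by
  rw [Set.uIcc_of_le hx0]
  refine continuousOn_of_forall_continuousAt (fun x hx => ?_)
  obtain ⟨hxa, hxb⟩ := hx
  have h1 : -1 < x := by linarith
  have h2 : x < 1 := by linarith
  have hc : (1:ℝ) - x^2 ≠ 0 := by nlinarith
  have hath : ContinuousAt ath x := (hasDerivAt_ath h1 h2).continuousAt
  exact (continuousAt_const.mul (((continuousAt_const.sub hath).pow m))).div
    (continuousAt_const.sub (continuousAt_id.pow 2)) hc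

lemma ftc (m : ℕ) (C K x0 : ℝ) (hx0 : 0 ≤ x0) (hx1 : x0 < 1) :
    ∫ x in (0:ℝ)..x0, C * (K - ath x)^m / (1 - x^2)
      = C * (K^(m+1) - (K - ath x0)^(m+1)) / (m+1) := by
  have hm : ((m:ℝ) + 1) ≠ 0 := by positivity
  have key : ∫ x in (0:ℝ)..x0, C * (K - ath x)^m / (1 - x^2)
      = (-(C * (K - ath x0)^(m+1) / (m+1))) - (-(C * (K - ath 0)^(m+1) / (m+1))) := by
    refine intervalIntegral.integral_eq_sub_of_hasDerivAt
      (f := fun x => -(C * (K - ath x)^(m+1) / ((m:ℝ)+1))) (fun x hx => ?_) ?_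
    · rw [Set.uIcc_of_le hx0] at hx
      obtain ⟨hxa, hxb⟩ := hx
      have h1 : -(1:ℝ) < x := by linarith
      have h2 : x < 1 := by linarith
      have hc : (1:ℝ) - x^2 ≠ 0 := by nlinarith
      have d1 : HasDerivAt (fun x => K - ath x) (-(1/(1-x^2))) x :=
        (hasDerivAt_ath h1 h2).const_sub K
      have d2 : HasDerivAt (fun x => (K - ath x)^(m+1))
          ((m+1) * (K - ath x)^m * (-(1/(1-x^2)))) x := by
        simpa using d1.fun_pow (m+1)
      have d3 := (d2.const_mul C).div_const ((m:ℝ)+1)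
      have d4 := d3.fun_neg
      convert d4 using 1
      field_simp
    · exact (contOn m C K x0 hx0 hx1).intervalIntegrable
  rw [key, ath_zero]
  field_simp
  ring


instance (d : ℕ) : IsProbabilityMeasure (unifd d) := by
  unfold unifd; infer_instance

instance (d : ℕ) : SigmaFinite (unifd d) := by
  unfold unifd; infer_instance

def A (d : ℕ) (s : ℝ) : Set (Fin d → ℝ) :=
  {y | (∀ k, y k ∈ Set.Icc (-1:ℝ) 1) ∧ ∏ k, (1 - y k ^ 2) ≤ s}

def B (d : ℕ) (s : ℝ) (y : ℝ) : Set (Fin d → ℝ) :=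
  {z | (y ∈ Set.Icc (-1:ℝ) 1 ∧ ∀ k, z k ∈ Set.Icc (-1:ℝ) 1)
    ∧ (1 - y^2) * ∏ k, (1 - z k ^ 2) ≤ s}

lemma meas_cube (d : ℕ) : MeasurableSet {z : Fin d → ℝ | ∀ k, z k ∈ Set.Icc (-1:ℝ) 1} := by
  rw [Set.setOf_forall]
  exact MeasurableSet.iInter (fun k => (measurable_pi_apply k) measurableSet_Icc)

lemma meas_prodfun (d : ℕ) : Measurable (fun z : Fin d → ℝ => ∏ k, (1 - z k ^ 2)) := by
  apply Finset.measurable_prod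
  intro k _
  exact measurable_const.sub ((measurable_pi_apply k).pow_const 2)

lemma meas_A (d : ℕ) (s : ℝ) : MeasurableSet (A d s) :=
  (meas_cube d).inter (measurableSet_le (meas_prodfun d) measurable_const)

lemma cube_one (d : ℕ) : unifd d {z : Fin d → ℝ | ∀ k, z k ∈ Set.Icc (-1:ℝ) 1} = 1 := by
  have h1 : {z : Fin d → ℝ | ∀ k, z k ∈ Set.Icc (-1:ℝ) 1}
      = Set.pi Set.univ (fun _ => Set.Icc (-1:ℝ) 1) := by
    ext z
    simp only [Set.mem_univ_pi, Set.mem_setOf_eq]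
  have h2 : unif (Set.Icc (-1:ℝ) 1) = 1 := by
    rw [unif, Measure.smul_apply, Measure.restrict_apply measurableSet_Icc,
      Set.inter_self, Real.volume_Icc, smul_eq_mul,
      show (1 : ℝ) - (-1) = 2 by norm_num, ENNReal.ofReal_ofNat]
    exact ENNReal.inv_mul_cancel (by norm_num) (by norm_num)
  rw [h1, unifd, Measure.pi_pi]
  simp [h2]

lemma recursion (d : ℕ) (s : ℝ) :
    unifd (d+1) (A (d+1) s) = ∫⁻ y, unifd d (B d s y) ∂unif := by
  set S : Set (ℝ × (Fin d → ℝ)) :=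
    {p | (p.1 ∈ Set.Icc (-1:ℝ) 1 ∧ ∀ k, p.2 k ∈ Set.Icc (-1:ℝ) 1)
      ∧ (1 - p.1^2) * ∏ k, (1 - p.2 k ^ 2) ≤ s} with hSdef
  have hS : MeasurableSet S := by
    have h1 : MeasurableSet {p : ℝ × (Fin d → ℝ) | p.1 ∈ Set.Icc (-1:ℝ) 1} :=
      measurable_fst measurableSet_Icc
    have h2 : MeasurableSet {p : ℝ × (Fin d → ℝ) | ∀ k, p.2 k ∈ Set.Icc (-1:ℝ) 1} := by
      rw [Set.setOf_forall]
      exact MeasurableSet.iInter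
        (fun k => ((measurable_pi_apply k).comp measurable_snd) measurableSet_Icc)
    have h3 : MeasurableSet {p : ℝ × (Fin d → ℝ) | (1 - p.1^2) * ∏ k, (1 - p.2 k ^ 2) ≤ s} :=
      measurableSet_le (((measurable_const.sub (measurable_fst.pow_const 2))).mul
        ((meas_prodfun d).comp measurable_snd)) measurable_const
    exact (h1.inter h2).inter h3
  have hmp := measurePreserving_piFinSuccAbove (fun _ : Fin (d+1) => unif) 0
  have hpre : (MeasurableEquiv.piFinSuccAbove (fun _ : Fin (d+1) => ℝ) 0) ⁻¹' S
      = A (d+1) s := by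
    ext f
    simp only [hSdef, A, Set.mem_preimage, MeasurableEquiv.piFinSuccAbove_apply,
      Set.mem_setOf_eq, Fin.succAbove_zero, Fin.insertNthEquiv,
      Equiv.coe_fn_symm_mk, Fin.removeNth_zero, Fin.tail_def]
    rw [Fin.forall_fin_succ, Fin.prod_univ_succ]
  have e1 : unifd (d+1) (A (d+1) s) = (unif.prod (unifd d)) S := by
    rw [← hpre]
    exact hmp.measure_preimage hS.nullMeasurableSet
  rw [e1, Measure.prod_apply hS]
  rfl


lemma unif_Icc (a b : ℝ) (ha : -1 ≤ a) (hb : b ≤ 1) :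
    unif (Set.Icc a b) = 2⁻¹ * ENNReal.ofReal (b - a) := by
  rw [unif, Measure.smul_apply, Measure.restrict_apply measurableSet_Icc, smul_eq_mul]
  congr 1
  rw [Set.Icc_inter_Icc, max_eq_left ha, min_eq_left hb, Real.volume_Icc]

lemma base_eq (s : ℝ) (h0 : 0 < s) (h1 : s ≤ 1) :
    unifd 1 (A 1 s) = ENNReal.ofReal (1 - Real.sqrt (1-s)) := by
  set x0 := Real.sqrt (1-s) with hx0def
  have hx0nn : 0 ≤ x0 := Real.sqrt_nonneg _
  have hx0sq : x0^2 = 1 - s := Real.sq_sqrt (by linarith)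
  have hx0le : x0 ≤ 1 := by nlinarith
  have hE : A 1 s = Set.pi Set.univ
      (fun _ : Fin 1 => Set.Icc (-1:ℝ) (-x0) ∪ Set.Icc x0 1) := by
    ext f
    simp only [A, Set.mem_univ_pi, Set.mem_setOf_eq, Fin.forall_fin_one,
      Fin.prod_univ_one, Set.mem_Icc, Set.mem_union]
    constructor
    · rintro ⟨⟨hfa, hfb⟩, hf2⟩
      have h2 : 1 - s ≤ (f 0)^2 := by nlinarith
      have h3 : x0 ≤ |f 0| := by
        have := Real.sqrt_le_sqrt h2
        rwa [Real.sqrt_sq_eq_abs, ← hx0def] at this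
      rcases le_or_gt (f 0) 0 with h | h
      · left
        rw [abs_of_nonpos h] at h3
        exact ⟨hfa, by linarith⟩
      · right
        rw [abs_of_pos h] at h3
        exact ⟨h3, hfb⟩
    · rintro (⟨hfa, hfb⟩ | ⟨hfa, hfb⟩)
      · have h4 : x0 ≤ -(f 0) := by linarith
        exact ⟨⟨hfa, by linarith⟩, by nlinarith⟩
      · exact ⟨⟨by linarith, hfb⟩, by nlinarith⟩
  rw [hE, unifd, Measure.pi_pi]
  rw [Fin.prod_univ_one]
  have hdisj : unif (Set.Icc (-1:ℝ) (-x0) ∩ Set.Icc x0 1) = 0 := by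
    have hsub : Set.Icc (-1:ℝ) (-x0) ∩ Set.Icc x0 1 ⊆ {0} := by
      rintro y ⟨⟨_, hy1⟩, ⟨hy2, _⟩⟩
      have : x0 = 0 := by linarith
      simp only [Set.mem_singleton_iff]
      linarith
    refine measure_mono_null hsub ?_
    rw [unif, Measure.smul_apply, Measure.restrict_apply (measurableSet_singleton 0)]
    have : ({(0:ℝ)} ∩ Set.Icc (-1:ℝ) 1) ⊆ {0} := Set.inter_subset_left
    have h0' := measure_mono_null this Real.volume_singleton
    rw [h0', smul_eq_mul, mul_zero]
  rw [measure_union₀ measurableSet_Icc.nullMeasurableSet hdisj]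
  rw [unif_Icc _ _ le_rfl (by linarith), unif_Icc _ _ (by linarith) le_rfl]
  rw [← mul_add, ← ENNReal.ofReal_add (by linarith) (by linarith)]
  have : (-x0 - -1) + (1 - x0) = 2 * (1 - x0) := by ring
  rw [this, ENNReal.ofReal_mul (by norm_num), ENNReal.ofReal_ofNat, ← mul_assoc,
    ENNReal.inv_mul_cancel (by norm_num) (by norm_num), one_mul]

lemma key_integral (m : ℕ) (C K x0 : ℝ) (hC : 0 ≤ C) (hx0 : 0 ≤ x0) (hx1 : x0 < 1)
    (hK : ath x0 ≤ K) :
    ∫⁻ y, ENNReal.ofReal (if |y| < x0 then C * (K - ath |y|)^m / (1 - y^2) else 1) ∂unif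
      = ENNReal.ofReal ((1 - x0) + C * (K^(m+1) - (K - ath x0)^(m+1)) / (m+1)) := by
  set g : ℝ → ℝ := fun x => C * (K - ath x)^m / (1 - x^2) with hg
  have hgnn : ∀ x, 0 ≤ x → x ≤ x0 → 0 ≤ g x := by
    intro x h0 h1
    have : ath x ≤ K := le_trans (ath_mono h0 h1 hx1) hK
    have hd : (0:ℝ) < 1 - x^2 := by nlinarith
    apply div_nonneg (mul_nonneg hC (pow_nonneg (by linarith) m)) hd.le
  have hsub : Set.Ioo (-x0) x0 ⊆ Set.Icc (-1:ℝ) 1 := by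
    intro y hy
    obtain ⟨a,b⟩ := hy
    exact ⟨by linarith, by linarith⟩
  have hIoo : MeasurableSet (Set.Ioo (-x0) x0) := measurableSet_Ioo
  have hdiff : MeasurableSet (Set.Icc (-1:ℝ) 1 \ Set.Ioo (-x0) x0) :=
    measurableSet_Icc.diff hIoo
  -- continuity of g ∘ abs on Icc (-x0) x0
  have hcont : ContinuousOn (fun y => g |y|) (Set.Icc (-x0) x0) := by
    have h1 : ContinuousOn g (Set.Icc 0 x0) := by
      have := contOn m C K x0 hx0 hx1
      rwa [Set.uIcc_of_le hx0] at this
    refine h1.comp continuous_abs.continuousOn ?_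
    intro y hy
    exact ⟨abs_nonneg y, abs_le.2 ⟨hy.1, hy.2⟩⟩
  have hInt : IntegrableOn (fun y => g |y|) (Set.Ioo (-x0) x0) volume :=
    (hcont.integrableOn_compact isCompact_Icc).mono_set Set.Ioo_subset_Icc_self
  -- step 1: split the lintegral
  have e0 : ∫⁻ y, ENNReal.ofReal (if |y| < x0 then g |y| else 1) ∂unif
      = 2⁻¹ * ∫⁻ y in Set.Icc (-1:ℝ) 1,
          ENNReal.ofReal (if |y| < x0 then g |y| else 1) ∂volume := by
    rw [unif, lintegral_smul_measure, smul_eq_mul]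
  have esplit : ∫⁻ y in Set.Icc (-1:ℝ) 1,
        ENNReal.ofReal (if |y| < x0 then g |y| else 1) ∂volume
      = (∫⁻ y in Set.Ioo (-x0) x0,
          ENNReal.ofReal (if |y| < x0 then g |y| else 1) ∂volume)
        + ∫⁻ y in Set.Icc (-1:ℝ) 1 \ Set.Ioo (-x0) x0,
          ENNReal.ofReal (if |y| < x0 then g |y| else 1) ∂volume := by
    rw [← lintegral_union hdiff Set.disjoint_sdiff_right, Set.union_diff_cancel hsub]
  -- part 2 : constant 1
  have epart2 : ∫⁻ y in Set.Icc (-1:ℝ) 1 \ Set.Ioo (-x0) x0,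
        ENNReal.ofReal (if |y| < x0 then g |y| else 1) ∂volume
      = ENNReal.ofReal (2 - 2*x0) := by
    rw [setLIntegral_congr_fun hdiff (fun y hy => ?_) , setLIntegral_one]
    · rw [measure_diff hsub hIoo.nullMeasurableSet (by simp [Real.volume_Ioo]),
        Real.volume_Icc, Real.volume_Ioo, ← ENNReal.ofReal_sub _ (by linarith)]
      norm_num
      ring_nf
    · have : ¬ (|y| < x0) := by
        rw [abs_lt]
        intro h
        exact hy.2 ⟨h.1, h.2⟩
      simp [this]
  -- part 1
  have epart1 : ∫⁻ y in Set.Ioo (-x0) x0,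
        ENNReal.ofReal (if |y| < x0 then g |y| else 1) ∂volume
      = ENNReal.ofReal (2 * (C * (K^(m+1) - (K - ath x0)^(m+1)) / (m+1))) := by
    rw [setLIntegral_congr_fun hIoo (fun y hy => ?_)
      (g := fun y => ENNReal.ofReal (g |y|))]
    · rw [← ofReal_integral_eq_lintegral_ofReal hInt
        ((ae_restrict_iff' hIoo).2 (ae_of_all _ ?_))]
      · congr 1
        have e1 : ∫ y in Set.Ioo (-x0) x0, g |y| ∂volume
            = ∫ y in (-x0)..x0, g |y| := by
          rw [intervalIntegral.integral_of_le (by linarith), integral_Ioc_eq_integral_Ioo]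
        have i1 : IntervalIntegrable (fun y => g |y|) volume (-x0) 0 := by
          apply ContinuousOn.intervalIntegrable
          apply hcont.mono
          rw [Set.uIcc_of_le (by linarith : -x0 ≤ 0)]
          exact Set.Icc_subset_Icc le_rfl hx0
        have i2 : IntervalIntegrable (fun y => g |y|) volume 0 x0 := by
          apply ContinuousOn.intervalIntegrable
          apply hcont.mono
          rw [Set.uIcc_of_le hx0]
          exact Set.Icc_subset_Icc (by linarith) le_rfl
        have e2 : ∫ y in (-x0)..(0:ℝ), g |y| = ∫ y in (0:ℝ)..x0, g |y| := by
          have := intervalIntegral.integral_comp_neg (a := (0:ℝ)) (b := x0)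
            (fun y => g |y|)
          simp only [abs_neg, neg_zero] at this
          rw [← this]
        have e3 : ∫ y in (0:ℝ)..x0, g |y| = ∫ y in (0:ℝ)..x0, g y := by
          apply intervalIntegral.integral_congr
          intro y hy
          rw [Set.uIcc_of_le hx0] at hy
          show g |y| = g y
          rw [abs_of_nonneg hy.1]
        rw [e1, ← intervalIntegral.integral_add_adjacent_intervals i1 i2, e2, e3,
          hg, ftc m C K x0 hx0 hx1]
        ring
      · intro y hy
        show (0:ℝ) ≤ g |y|
        have : |y| < x0 := abs_lt.2 ⟨hy.1, hy.2⟩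
        exact hgnn |y| (abs_nonneg y) this.le
    · have : |y| < x0 := abs_lt.2 ⟨hy.1, hy.2⟩
      simp [this]
  have hI : 0 ≤ C * (K^(m+1) - (K - ath x0)^(m+1)) / (m+1) := by
    have h2 := intervalIntegral.integral_nonneg (μ := volume) hx0
      (fun x hx => hgnn x hx.1 hx.2)
    simp only [hg] at h2
    rwa [ftc m C K x0 hx0 hx1] at h2
  have hswitch : ∫⁻ y, ENNReal.ofReal (if |y| < x0 then C * (K - ath |y|)^m / (1 - y^2) else 1) ∂unif
      = ∫⁻ y, ENNReal.ofReal (if |y| < x0 then g |y| else 1) ∂unif :=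
    lintegral_congr (fun y => by simp only [hg, sq_abs])
  rw [hswitch, e0, esplit, epart1, epart2, ← ENNReal.ofReal_add (by linarith) (by linarith)]
  have e4 : 2 * (C * (K^(m+1) - (K - ath x0)^(m+1)) / (m+1)) + (2 - 2*x0)
      = 2 * ((1 - x0) + C * (K^(m+1) - (K - ath x0)^(m+1)) / (m+1)) := by ring
  rw [e4, ENNReal.ofReal_mul (by norm_num), ENNReal.ofReal_ofNat, ← mul_assoc,
    ENNReal.inv_mul_cancel (by norm_num) (by norm_num), one_mul]



lemma ae_Icc : ∀ᵐ y ∂unif, y ∈ Set.Icc (-1:ℝ) 1 := by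
  rw [ae_iff]
  have : {y : ℝ | ¬ y ∈ Set.Icc (-1:ℝ) 1} = (Set.Icc (-1:ℝ) 1)ᶜ := rfl
  rw [this, unif, Measure.smul_apply,
    Measure.restrict_apply measurableSet_Icc.compl, Set.compl_inter_self,
    measure_empty, smul_eq_mul, mul_zero]

lemma upper_all (m : ℕ) : ∀ s : ℝ, 0 < s → s ≤ 1 →
    unifd (m+1) (A (m+1) s)
      ≤ ENNReal.ofReal (s * (el s + (((m:ℝ)+1)*Real.log 2 + 1))^m / m.factorial) := by
  induction m with
  | zero =>
    intro s h0 h1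
    rw [base_eq s h0 h1]
    apply ENNReal.ofReal_le_ofReal
    have h2 := sqrt_ub h0 h1
    norm_num
    linarith
  | succ m ih =>
    intro r hr0 hr1
    set x0 := Real.sqrt (1-r) with hx0def
    have hx0nn : 0 ≤ x0 := Real.sqrt_nonneg _
    have hx0sq : x0^2 = 1-r := Real.sq_sqrt (by linarith)
    have hx0lt : x0 < 1 := by nlinarith
    have hel := el_nonneg hr0 hr1
    have l2 : (0:ℝ) < Real.log 2 := by have := log2_half; linarith
    have hmnn : (0:ℝ) ≤ (m:ℝ) := Nat.cast_nonneg m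
    set cm : ℝ := ((m:ℝ)+1)*Real.log 2 + 1 with hcm
    have hcm0 : 0 < cm := by rw [hcm]; nlinarith
    set K : ℝ := el r + cm + Real.log 2 with hKdef
    set C : ℝ := r / m.factorial with hC
    have hfactpos : (0:ℝ) < m.factorial := by exact_mod_cast m.factorial_pos
    have hCnn : 0 ≤ C := by rw [hC]; positivity
    have hath0 : ath x0 = el r + Real.log (1+x0) := by
      have e1 : 1 - x0^2 = r := by linarith
      rw [ath_eq (by linarith) hx0lt, e1, el_eq hr0.le]
      ring
    have hlog1x0_le : Real.log (1+x0) ≤ Real.log 2 :=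
      Real.log_le_log (by linarith) (by linarith)
    have hlog1x0_nn : 0 ≤ Real.log (1+x0) := Real.log_nonneg (by linarith)
    have hathx0K : ath x0 ≤ K := by rw [hath0, hKdef]; linarith
    rw [recursion (m+1) r]
    have hpt : ∀ y : ℝ, unifd (m+1) (B (m+1) r y)
        ≤ ENNReal.ofReal (if |y| < x0 then C * (K - ath |y|)^m / (1 - y^2) else 1) := by
      intro y
      by_cases h : |y| < x0
      · rw [if_pos h]
        have hyabs : 0 ≤ |y| := abs_nonneg y
        have hy2 : y^2 < 1 - r := by
          rw [← hx0sq, ← sq_abs]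
          exact pow_lt_pow_left₀ h hyabs two_ne_zero
        have hu : 0 < 1 - y^2 := by linarith
        have hu1 : 1 - y^2 ≤ 1 := by nlinarith [sq_nonneg y]
        have hyIcc : y ∈ Set.Icc (-1:ℝ) 1 := by
          have : |y| ≤ 1 := by linarith
          exact abs_le.1 this
        have hBA : B (m+1) r y = A (m+1) (r / (1 - y^2)) := by
          ext z
          simp only [B, A, Set.mem_setOf_eq, hyIcc, true_and]
          rw [le_div_iff₀ hu, mul_comm]
        rw [hBA]
        have hs' : 0 < r / (1 - y^2) := by positivity
        have hs'1 : r / (1 - y^2) ≤ 1 := (div_le_one hu).2 (by linarith)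
        refine le_trans (ih (r/(1-y^2)) hs' hs'1) (ENNReal.ofReal_le_ofReal ?_)
        have hel' := el_div hr0 hu
        have hbase1nn : 0 ≤ el (r/(1-y^2)) + cm := by
          have := el_nonneg hs' hs'1
          linarith
        have habs1 : -(1:ℝ) < |y| := by linarith
        have habslt : |y| < 1 := by linarith
        have hids := ath_log habs1 habslt
        have hsqa : |y|^2 = y^2 := sq_abs y
        have hlb : Real.log (1+|y|) ≤ Real.log 2 :=
          Real.log_le_log (by linarith) (by linarith)
        have hbase : el (r/(1-y^2)) + cm ≤ K - ath |y| := by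
          rw [hel', hKdef]
          rw [hsqa] at hids
          linarith
        have hpow : (el (r/(1-y^2)) + cm)^m ≤ (K - ath |y|)^m :=
          pow_le_pow_left₀ hbase1nn hbase m
        rw [hC]
        have h2 : r / (1-y^2) * (el (r/(1-y^2)) + cm)^m / m.factorial
            = r * (el (r/(1-y^2)) + cm)^m / ((1-y^2) * m.factorial) := by
          rw [div_mul_eq_mul_div, div_div]
        have h3 : r / m.factorial * (K - ath |y|)^m / (1-y^2)
            = r * (K - ath |y|)^m / ((1-y^2) * m.factorial) := by
          rw [div_mul_eq_mul_div, div_div, mul_comm ((m.factorial:ℝ)) (1-y^2)]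
        rw [h2, h3]
        gcongr
      · rw [if_neg h]
        calc unifd (m+1) (B (m+1) r y) ≤ 1 := prob_le_one
          _ = ENNReal.ofReal 1 := ENNReal.ofReal_one.symm
    refine le_trans (lintegral_mono (fun y => hpt y)) ?_
    rw [key_integral m C K x0 hCnn hx0nn hx0lt hathx0K]
    apply ENNReal.ofReal_le_ofReal
    push_cast
    have hfact1 : (1:ℝ) ≤ (m+1).factorial := one_le_fact _
    have hfactpos1 : (0:ℝ) < (m+1).factorial := by exact_mod_cast (m+1).factorial_pos
    have hKθnn : cm ≤ K - ath x0 := by rw [hKdef, hath0]; linarith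
    have hcmK : ((m+1).factorial:ℝ) ≤ (K - ath x0)^(m+1) := by
      calc ((m+1).factorial:ℝ) ≤ (((m+1):ℕ)*Real.log 2 + 1)^(m+1) := fact_le (m+1)
        _ = cm^(m+1) := by rw [hcm]; push_cast; ring_nf
        _ ≤ (K - ath x0)^(m+1) := pow_le_pow_left₀ hcm0.le hKθnn _
    have h1x0 : 1 - x0 ≤ r := by
      have := sqrt_ub hr0 hr1
      rw [← hx0def] at this
      linarith
    have hfs : ((m+1).factorial : ℝ) = ((m:ℝ)+1) * m.factorial := by
      rw [Nat.factorial_succ]; push_cast; ring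
    have key2 : C * (K^(m+1) - (K - ath x0)^(m+1))/((m:ℝ)+1)
        = r*K^(m+1)/((m+1).factorial) - r*(K-ath x0)^(m+1)/((m+1).factorial) := by
      rw [hC, hfs]; field_simp
    have key3 : 1 - x0 ≤ r*(K - ath x0)^(m+1)/((m+1).factorial) := by
      have hq : 1 ≤ (K-ath x0)^(m+1)/((m+1).factorial:ℝ) := (one_le_div hfactpos1).2 hcmK
      have h5 := mul_le_mul_of_nonneg_left hq hr0.le
      have h6 : r * ((K - ath x0)^(m+1) / ((m+1).factorial:ℝ))
          = r * (K - ath x0)^(m+1) / ((m+1).factorial:ℝ) := by ring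
      rw [h6] at h5
      linarith
    have hgoal : r * (el r + (((m:ℝ)+1+1)*Real.log 2 + 1))^(m+1) / ((m+1).factorial)
        = r * K^(m+1)/((m+1).factorial) := by
      rw [hKdef, hcm]; ring_nf
    calc 1 - x0 + C * (K^(m+1) - (K - ath x0)^(m+1))/((m:ℝ)+1)
        ≤ r*(K-ath x0)^(m+1)/((m+1).factorial)
          + (r*K^(m+1)/((m+1).factorial) - r*(K-ath x0)^(m+1)/((m+1).factorial)) := by
          rw [← key2]; linarith
      _ = r*K^(m+1)/((m+1).factorial) := by ring
      _ = r * (el r + (((m:ℝ)+1+1)*Real.log 2 + 1))^(m+1) / ((m+1).factorial) := hgoal.symm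

lemma lower_all (m : ℕ) : ∀ s : ℝ, 0 < s → s ≤ 1 →
    ENNReal.ofReal (s/2 * (el s + Real.log 2)^m / m.factorial + s^2/8)
      ≤ unifd (m+1) (A (m+1) s) := by
  induction m with
  | zero =>
    intro s h0 h1
    rw [base_eq s h0 h1]
    apply ENNReal.ofReal_le_ofReal
    have h2 := sqrt_lb h0 h1
    norm_num
    linarith
  | succ m ih =>
    intro r hr0 hr1
    set x0 := Real.sqrt (1-r) with hx0def
    have hx0nn : 0 ≤ x0 := Real.sqrt_nonneg _
    have hx0sq : x0^2 = 1-r := Real.sq_sqrt (by linarith)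
    have hx0lt : x0 < 1 := by nlinarith
    have hel := el_nonneg hr0 hr1
    have l2 : (0:ℝ) < Real.log 2 := by have := log2_half; linarith
    have l2' : Real.log 2 ≤ 1 := by
      have := Real.log_two_lt_d9
      linarith
    set P : ℝ := el r + Real.log 2 with hPdef
    set C : ℝ := r / (2 * m.factorial) with hC
    have hfactpos : (0:ℝ) < m.factorial := by exact_mod_cast m.factorial_pos
    have hCnn : 0 ≤ C := by rw [hC]; positivity
    have hath0 : ath x0 = el r + Real.log (1+x0) := by
      have e1 : 1 - x0^2 = r := by linarith
      rw [ath_eq (by linarith) hx0lt, e1, el_eq hr0.le]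
      ring
    have hlog1x0_le : Real.log (1+x0) ≤ Real.log 2 :=
      Real.log_le_log (by linarith) (by linarith)
    have hlog1x0_nn : 0 ≤ Real.log (1+x0) := Real.log_nonneg (by linarith)
    have hathx0P : ath x0 ≤ P := by rw [hath0, hPdef]; linarith
    rw [recursion (m+1) r]
    have hpt : ∀ᵐ y ∂unif,
        ENNReal.ofReal (if |y| < x0 then C * (P - ath |y|)^m / (1 - y^2) else 1)
          ≤ unifd (m+1) (B (m+1) r y) := by
      filter_upwards [ae_Icc] with y hyIcc
      by_cases h : |y| < x0
      · rw [if_pos h]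
        have hyabs : 0 ≤ |y| := abs_nonneg y
        have hy2 : y^2 < 1 - r := by
          rw [← hx0sq, ← sq_abs]
          exact pow_lt_pow_left₀ h hyabs two_ne_zero
        have hu : 0 < 1 - y^2 := by linarith
        have hBA : B (m+1) r y = A (m+1) (r / (1 - y^2)) := by
          ext z
          simp only [B, A, Set.mem_setOf_eq, hyIcc, true_and]
          rw [le_div_iff₀ hu, mul_comm]
        rw [hBA]
        have hs' : 0 < r / (1 - y^2) := by positivity
        have hs'1 : r / (1 - y^2) ≤ 1 := (div_le_one hu).2 (by linarith)
        refine le_trans (ENNReal.ofReal_le_ofReal ?_) (ih (r/(1-y^2)) hs' hs'1)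
        have hel' := el_div hr0 hu
        have habs1 : -(1:ℝ) < |y| := by linarith
        have habslt : |y| < 1 := by linarith
        have hids := ath_log habs1 habslt
        have hsqa : |y| ^ 2 = y ^ 2 := sq_abs y
        rw [hsqa] at hids
        have hathy_nn : 0 ≤ ath |y| := ath_nonneg hyabs habslt
        have hathy_le : ath |y| ≤ ath x0 := ath_mono hyabs h.le hx0lt
        have hb2nn : 0 ≤ P - ath |y| := by
          have : ath |y| ≤ P := le_trans hathy_le hathx0P
          linarith
        have hlogu_nn : 0 ≤ Real.log (1 + |y|) := Real.log_nonneg (by linarith)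
        have hbase : P - ath |y| ≤ el (r/(1-y^2)) + Real.log 2 := by
          rw [hel', hPdef]
          linarith
        have hpow : (P - ath |y|)^m ≤ (el (r/(1-y^2)) + Real.log 2)^m :=
          pow_le_pow_left₀ hb2nn hbase m
        have h2 : C * (P - ath |y|)^m / (1-y^2)
            = r * (P - ath |y|)^m / ((1-y^2) * (2*m.factorial)) := by
          rw [hC, div_mul_eq_mul_div, div_div, mul_comm ((2:ℝ)*(m.factorial:ℝ)) (1-y^2)]
        have h3 : r/(1-y^2)/2 * (el (r/(1-y^2)) + Real.log 2)^m / m.factorial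
            = r * (el (r/(1-y^2)) + Real.log 2)^m / ((1-y^2) * (2*m.factorial)) := by
          rw [div_div, div_mul_eq_mul_div, div_div, mul_assoc]
        have step1 : C * (P - ath |y|)^m / (1-y^2)
            ≤ r/(1-y^2)/2 * (el (r/(1-y^2)) + Real.log 2)^m / m.factorial := by
          rw [h2, h3]
          gcongr
        refine le_trans step1 ?_
        have : r/(1-y^2)/2 * (el (r/(1-y^2)) + Real.log 2)^m / m.factorial
            ≤ r/(1-y^2)/2 * (el (r/(1-y^2)) + Real.log 2)^m / m.factorial
              + (r/(1-y^2))^2/8 := le_add_of_nonneg_right (by positivity)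
        linarith
      · rw [if_neg h]
        have hcube : {z : Fin (m+1) → ℝ | ∀ k, z k ∈ Set.Icc (-1:ℝ) 1}
            ⊆ B (m+1) r y := by
          intro z hz
          refine ⟨⟨hyIcc, hz⟩, ?_⟩
          have hxley : x0 ≤ |y| := not_lt.1 h
          have hy2 : 1 - r ≤ y^2 := by
            calc 1 - r = x0^2 := hx0sq.symm
              _ ≤ |y|^2 := pow_le_pow_left₀ hx0nn hxley 2
              _ = y^2 := sq_abs y
          have hy1 : y^2 ≤ 1 := by nlinarith [hyIcc.1, hyIcc.2]
          have hprod0 : 0 ≤ ∏ k, (1 - z k^2) :=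
            Finset.prod_nonneg (fun k _ => by nlinarith [(hz k).1, (hz k).2])
          have hprod1 : ∏ k, (1 - z k^2) ≤ 1 :=
            Finset.prod_le_one (fun k _ => by nlinarith [(hz k).1, (hz k).2])
              (fun k _ => by nlinarith [(hz k).1, (hz k).2])
          calc (1 - y^2) * ∏ k, (1 - z k^2) ≤ (1 - y^2) * 1 :=
                mul_le_mul_of_nonneg_left hprod1 (by linarith)
            _ ≤ r := by rw [mul_one]; linarith
        calc ENNReal.ofReal 1 = 1 := ENNReal.ofReal_one
          _ = unifd (m+1) {z : Fin (m+1) → ℝ | ∀ k, z k ∈ Set.Icc (-1:ℝ) 1} :=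
              (cube_one (m+1)).symm
          _ ≤ unifd (m+1) (B (m+1) r y) := measure_mono hcube
    refine le_trans ?_ (lintegral_mono_ae hpt)
    rw [key_integral m C P x0 hCnn hx0nn hx0lt hathx0P]
    apply ENNReal.ofReal_le_ofReal
    push_cast
    set F : ℝ := ((m+1).factorial : ℝ) with hFdef
    have hfact1 : (1:ℝ) ≤ F := by rw [hFdef]; exact one_le_fact _
    have hfs : F = ((m:ℝ)+1) * m.factorial := by
      rw [hFdef, Nat.factorial_succ]; push_cast; ring
    have hδ : P - ath x0 = Real.log 2 - Real.log (1+x0) := by rw [hPdef, hath0]; ring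
    have hδnn : 0 ≤ P - ath x0 := by rw [hδ]; linarith
    have hδ1 : (P - ath x0)^(m+1) ≤ 1 := by
      apply pow_le_one₀ hδnn
      rw [hδ]; linarith
    have h1x0 : r/2 + r^2/8 ≤ 1 - x0 := by
      have := sqrt_lb hr0 hr1
      rw [← hx0def] at this
      linarith
    have hden : (2*(m.factorial:ℝ))*((m:ℝ)+1) = 2*F := by rw [hfs]; ring
    have hCZ : ∀ Z : ℝ, C*Z/((m:ℝ)+1) = r*Z/(2*F) := by
      intro Z
      rw [hC, div_mul_eq_mul_div, div_div, hden]
    have key2 : C * (P^(m+1) - (P - ath x0)^(m+1))/((m:ℝ)+1)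
        = r*P^(m+1)/(2*F) - r*(P-ath x0)^(m+1)/(2*F) := by
      have e1 : C * (P^(m+1) - (P - ath x0)^(m+1))/((m:ℝ)+1)
          = C*P^(m+1)/((m:ℝ)+1) - C*(P - ath x0)^(m+1)/((m:ℝ)+1) := by ring
      rw [e1, hCZ, hCZ]
    have key3 : r*(P - ath x0)^(m+1)/(2*F) ≤ r/2 := by
      have hA : r*(P - ath x0)^(m+1) ≤ r := by nlinarith
      have hB : (2:ℝ) ≤ 2*F := by linarith
      calc r*(P - ath x0)^(m+1)/(2*F) ≤ r/(2*F) := by gcongr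
        _ ≤ r/2 := by gcongr
    have hLHS : r/2 * P^(m+1) / F + r^2/8 = r*P^(m+1)/(2*F) + r^2/8 := by ring
    rw [hLHS]
    linarith [key2, key3]

end S15

theorem stmt_15 (d : ℕ) (hd : 1 ≤ d) (r : ℝ) (hr0 : 0 < r) (hr1 : r ≤ 1) :
    ENNReal.ofReal (r / (2 * Nat.factorial (d - 1))
        * Real.log (1 / Real.sqrt r) ^ (d - 1))
      < (unifd d) {y | (∀ k, y k ∈ Set.Icc (-1 : ℝ) 1) ∧ ∏ k, (1 - y k ^ 2) ≤ r} ∧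
    (unifd d) {y | (∀ k, y k ∈ Set.Icc (-1 : ℝ) 1) ∧ ∏ k, (1 - y k ^ 2) ≤ r}
      ≤ ENNReal.ofReal (r / Nat.factorial (d - 1)
          * Real.log (2 ^ d * Real.exp 1 / Real.sqrt r) ^ (d - 1)) := by
  obtain ⟨m, rfl⟩ : ∃ m, d = m + 1 := ⟨d - 1, (Nat.succ_pred_eq_of_pos hd).symm⟩
  simp only [Nat.add_sub_cancel]
  have hset : {y : Fin (m+1) → ℝ | (∀ k, y k ∈ Set.Icc (-1:ℝ) 1) ∧ ∏ k, (1 - y k ^ 2) ≤ r}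
      = S15.A (m+1) r := rfl
  rw [hset]
  have hel_eq : S15.el r = Real.log (1 / Real.sqrt r) := rfl
  have helnn : 0 ≤ S15.el r := S15.el_nonneg hr0 hr1
  have l2 : (0:ℝ) < Real.log 2 := by have := S15.log2_half; linarith
  have hfactpos : (0:ℝ) < (m.factorial:ℝ) := by exact_mod_cast m.factorial_pos
  constructor
  · refine lt_of_lt_of_le ?_ (S15.lower_all m r hr0 hr1)
    rw [← hel_eq]
    have e1 : r / (2 * (m.factorial:ℝ)) * S15.el r^m
        = r/2 * S15.el r^m / (m.factorial:ℝ) := by ring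
    have hstep : r/2 * S15.el r^m / (m.factorial:ℝ)
        ≤ r/2 * (S15.el r + Real.log 2)^m / (m.factorial:ℝ) := by
      gcongr <;> linarith
    have hpos : (0:ℝ) < r^2/8 := by positivity
    have t1 : 0 ≤ r/2 * (S15.el r + Real.log 2)^m / (m.factorial:ℝ) :=
      div_nonneg (mul_nonneg (by positivity) (pow_nonneg (by linarith) m)) hfactpos.le
    have hBpos : 0 < r/2 * (S15.el r + Real.log 2)^m / (m.factorial:ℝ) + r^2/8 := by
      linarith
    refine (ENNReal.ofReal_lt_ofReal_iff hBpos).2 ?_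
    calc r / (2 * (m.factorial:ℝ)) * S15.el r^m
        = r/2 * S15.el r^m / (m.factorial:ℝ) := e1
      _ < r / 2 * (S15.el r + Real.log 2)^m / (m.factorial:ℝ) + r^2/8 := by linarith
  · refine le_trans (S15.upper_all m r hr0 hr1) (le_of_eq ?_)
    have hlog : Real.log (2^(m+1) * Real.exp 1 / Real.sqrt r)
        = S15.el r + (((m:ℝ)+1)*Real.log 2 + 1) := by
      rw [Real.log_div (by positivity) (Real.sqrt_pos.2 hr0).ne',
        Real.log_mul (by positivity) (Real.exp_pos 1).ne', Real.log_pow, Real.log_exp]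
      have h4 : S15.el r = - Real.log (Real.sqrt r) := by
        rw [hel_eq, one_div, Real.log_inv]
      rw [h4]
      push_cast
      ring
    rw [hlog]
    congr 1
    ring

end
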